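/- The Gaussian mechanism satisfies (λ, λΔ₂²/(2σ²))-Rényi differential privacy: if f has ℓ₂-sensitivity at most Δ₂, then for any neighboring datasets X, X', the Rényi divergence of order λ between f(X)+N(0,σ²I) and f(X')+N(0,σ²I) is at most λΔ₂²/(2σ²). -/

import Mathlib

open MeasureTheory

noncomputable def gaussDensity (μ σ x : ℝ) : ℝ :=
  (1 / (σ * Real.sqrt (2 * Real.pi))) * Real.exp (-(x - μ) ^ 2 / (2 * σ ^ 2))

lemma gauss_int {σ : ℝ} (hσ : 0 < σ) (μ : ℝ) : ∫ x : ℝ, gaussDensity μ σ x = 1 := by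
  unfold gaussDensity
  rw [integral_const_mul]
  have h1 : ∫ x : ℝ, Real.exp (-(x - μ) ^ 2 / (2 * σ ^ 2))
      = ∫ x : ℝ, Real.exp (-(1/(2*σ^2)) * x ^ 2) := by
    rw [← integral_sub_right_eq_self (fun x => Real.exp (-(1/(2*σ^2)) * x ^ 2)) μ]
    congr 1; ext x; ring_nf
  rw [h1, integral_gaussian]
  have h2 : Real.pi / (1/(2*σ^2)) = (σ * Real.sqrt (2 * Real.pi))^2 := by
    rw [mul_pow, Real.sq_sqrt (by positivity)]
    field_simp
  rw [h2, Real.sqrt_sq (by positivity)]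
  field_simp

lemma one_dim {σ : ℝ} (hσ : 0 < σ) (l μ ν : ℝ) :
    ∫ x : ℝ, gaussDensity μ σ x ^ l * gaussDensity ν σ x ^ (1 - l)
      = Real.exp (l * (l - 1) * (μ - ν) ^ 2 / (2 * σ ^ 2)) := by
  have hc : (0:ℝ) < 1 / (σ * Real.sqrt (2 * Real.pi)) := by positivity
  have key : ∀ x : ℝ, gaussDensity μ σ x ^ l * gaussDensity ν σ x ^ (1 - l)
      = Real.exp (l * (l - 1) * (μ - ν) ^ 2 / (2 * σ ^ 2)) *
        gaussDensity (l * μ + (1 - l) * ν) σ x := by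
    intro x
    unfold gaussDensity
    rw [Real.mul_rpow hc.le (Real.exp_nonneg _), Real.mul_rpow hc.le (Real.exp_nonneg _),
        ← Real.exp_mul, ← Real.exp_mul]
    have e1 : (1 / (σ * Real.sqrt (2 * Real.pi))) ^ l * Real.exp (-(x - μ) ^ 2 / (2 * σ ^ 2) * l)
        * ((1 / (σ * Real.sqrt (2 * Real.pi))) ^ (1-l)
          * Real.exp (-(x - ν) ^ 2 / (2 * σ ^ 2) * (1-l)))
        = ((1 / (σ * Real.sqrt (2 * Real.pi))) ^ l * (1 / (σ * Real.sqrt (2 * Real.pi))) ^ (1-l))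
          * (Real.exp (-(x - μ) ^ 2 / (2 * σ ^ 2) * l)
            * Real.exp (-(x - ν) ^ 2 / (2 * σ ^ 2) * (1-l))) := by ring
    rw [e1, ← Real.rpow_add hc, ← Real.exp_add]
    have e2 : l + (1 - l) = (1:ℝ) := by ring
    rw [e2, Real.rpow_one]
    have e3 : -(x - μ) ^ 2 / (2 * σ ^ 2) * l + -(x - ν) ^ 2 / (2 * σ ^ 2) * (1 - l)
        = l * (l - 1) * (μ - ν) ^ 2 / (2 * σ ^ 2)
          + -(x - (l * μ + (1 - l) * ν)) ^ 2 / (2 * σ ^ 2) := by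
      field_simp; ring
    rw [e3, Real.exp_add]; ring
  simp_rw [key]
  rw [integral_const_mul, gauss_int hσ, mul_one]

/-- The Gaussian mechanism satisfies `(λ, λΔ₂²/(2σ²))`-Rényi differential privacy: if
`f : D → ℝ^d` has ℓ₂-sensitivity at most `Δ₂` on neighboring datasets, then for any neighboring
datasets `X, X'`, the Rényi divergence of order `λ` between `f(X) + N(0, σ²I)` and
`f(X') + N(0, σ²I)` (whose densities are products of coordinatewise Gaussian densities)
is at most `λ Δ₂² / (2σ²)`. -/
theorem gaussian_mechanism_rdp {D : Type*} (Neighbor : D → D → Prop) (d : ℕ)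
    (f : D → (Fin d → ℝ)) (Δ₂ σ l : ℝ) (hσ : 0 < σ) (hl : 1 < l)
    (hsens : ∀ X X', Neighbor X X' →
      Real.sqrt (∑ i : Fin d, (f X i - f X' i) ^ 2) ≤ Δ₂) :
    ∀ X X', Neighbor X X' →
      (1 / (l - 1)) *
          Real.log (∫ x : Fin d → ℝ,
            (∏ i : Fin d, gaussDensity (f X i) σ (x i)) ^ l *
              (∏ i : Fin d, gaussDensity (f X' i) σ (x i)) ^ (1 - l))
        ≤ l * Δ₂ ^ 2 / (2 * σ ^ 2) := by
  intro X X' hN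
  have hgpos : ∀ (μ x : ℝ), 0 < gaussDensity μ σ x := fun μ x => by
    unfold gaussDensity; positivity
  have hint : (∫ x : Fin d → ℝ,
      (∏ i : Fin d, gaussDensity (f X i) σ (x i)) ^ l *
        (∏ i : Fin d, gaussDensity (f X' i) σ (x i)) ^ (1 - l))
      = Real.exp (l * (l - 1) * (∑ i : Fin d, (f X i - f X' i) ^ 2) / (2 * σ ^ 2)) := by
    have step : ∀ x : Fin d → ℝ,
        (∏ i : Fin d, gaussDensity (f X i) σ (x i)) ^ l *
          (∏ i : Fin d, gaussDensity (f X' i) σ (x i)) ^ (1 - l)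
        = ∏ i : Fin d, (gaussDensity (f X i) σ (x i) ^ l *
            gaussDensity (f X' i) σ (x i) ^ (1 - l)) := by
      intro x
      rw [← Real.finset_prod_rpow _ _ (fun i _ => (hgpos _ _).le) l,
          ← Real.finset_prod_rpow _ _ (fun i _ => (hgpos _ _).le) (1-l),
          ← Finset.prod_mul_distrib]
    simp_rw [step]
    rw [integral_fintype_prod_volume_eq_prod (ι := Fin d)
      (f := fun i x => gaussDensity (f X i) σ x ^ l * gaussDensity (f X' i) σ x ^ (1 - l))]
    simp_rw [one_dim hσ]
    rw [← Real.exp_sum]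
    congr 1
    rw [← Finset.sum_div, ← Finset.mul_sum]
  rw [hint, Real.log_exp]
  have hS : (∑ i : Fin d, (f X i - f X' i) ^ 2) ≤ Δ₂ ^ 2 := by
    have h0 : (0:ℝ) ≤ ∑ i : Fin d, (f X i - f X' i) ^ 2 := by positivity
    have := hsens X X' hN
    calc (∑ i : Fin d, (f X i - f X' i) ^ 2)
        = Real.sqrt (∑ i : Fin d, (f X i - f X' i) ^ 2) ^ 2 := (Real.sq_sqrt h0).symm
      _ ≤ Δ₂ ^ 2 := by
          apply pow_le_pow_left₀ (Real.sqrt_nonneg _) this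
  have hl1 : (0:ℝ) < l - 1 := by linarith
  have e4 : (1 / (l - 1)) * (l * (l - 1) * (∑ i : Fin d, (f X i - f X' i) ^ 2) / (2 * σ ^ 2))
      = l * (∑ i : Fin d, (f X i - f X' i) ^ 2) / (2 * σ ^ 2) := by
    field_simp
  rw [e4]
  gcongr
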